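/- Let W be a left separating point of M. If δ : A → M is linear and satisfies δ(W) = Aδ(B)* + δ(A)B* whenever AB* = W, then δ is a Jordan derivation and δ(WA) = δ(W)A + Wδ(A*)* for every A ∈ A. -/
import Mathlib

open MulOpposite

/-- If `W` is a left separating point and `δ(W) = A δ(B)* + δ(A) B*` whenever `A B* = W`,
then `δ` is a Jordan derivation and `δ(W A) = δ(W) A + W δ(A*)*` for every `A`. -/
theorem stmt2 {A : Type*} {M : Type*}
    [NormedRing A] [NormedAlgebra ℂ A] [CompleteSpace A] [StarRing A]
    [AddCommGroup M] [Module ℂ M] [Module A M] [Module Aᵐᵒᵖ M]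
    [SMulCommClass A Aᵐᵒᵖ M] [IsScalarTower ℂ A M] [IsScalarTower ℂ Aᵐᵒᵖ M]
    [StarAddMonoid M]
    (hstar_left : ∀ (a : A) (m : M), star (a • m) = op (star a) • star m)
    (hstar_right : ∀ (a : A) (m : M), star (op a • m) = star a • star m)
    (W : A) (hW : ∀ m : M, W • m = 0 → m = 0)
    (δ : A →ₗ[ℂ] M)
    (hδ : ∀ a b : A, a * star b = W → δ W = a • star (δ b) + op (star b) • δ a) :
    (∀ a : A, δ (a * a) = op a • δ a + a • δ a) ∧
      (∀ a : A, δ (W * a) = op a • δ W + W • star (δ (star a))) := by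
  -- abbreviation
  set Q : A → M := fun t => star (δ (star t)) with hQdef
  have hQadd : ∀ u v : A, Q (u + v) = Q u + Q v := by
    intro u v; simp [hQdef, star_add, map_add]
  -- commuting the two actions
  have hcomm : ∀ (y z : A) (m : M), op y • z • m = z • op y • m :=
    fun y z m => (smul_comm z (op y) m).symm
  have hc2 : ∀ (c : ℂ) (z : A) (m : M), z • c • m = c • z • m :=
    fun c z m => smul_comm _ _ _
  have hc3 : ∀ (c : ℂ) (z : A) (m : M), op z • c • m = c • op z • m :=
    fun c z m => smul_comm _ _ _
  -- casts
  have hcast : ∀ n : ℕ, ((n:ℂ)) • (1:A) = (n:A) := by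
    intro n; rw [← Algebra.algebraMap_eq_smul_one, map_natCast]
  have hnsmul : ∀ (n : ℕ) (m : M), ((n:A)) • m = ((n:ℂ)) • m := by
    intro n m; rw [← hcast, smul_assoc, one_smul]
  have hopnsmul : ∀ (n : ℕ) (m : M), op ((n:A)) • m = ((n:ℂ)) • m := by
    intro n m; rw [← hcast, op_smul, smul_assoc, op_one, one_smul]
  -- δ 1 = 0
  have hδ1 : δ 1 = 0 := by
    have h := hδ W 1 (by simp)
    simp only [star_one, op_one, one_smul, mul_one] at h
    have h0 : W • star (δ 1) = 0 := by
      have h' : W • star (δ 1) + δ W = δ W := h.symm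
      exact add_eq_right.mp h'
    exact star_eq_zero.mp (hW _ h0)
  have hQnat : ∀ n : ℕ, Q ((n:A)) = 0 := by
    intro n
    have h1 : δ ((n:A)) = 0 := by
      rw [← hcast, map_smul, hδ1, smul_zero]
    simp [hQdef, star_natCast, h1]
  -- the key consequence of the hypothesis, for invertible elements
  have key : ∀ t s : A, t * s = 1 → s * t = 1 →
      δ W = (W * s) • Q t + op t • δ (W * s) := by
    intro t s h1 h2
    have h : (W * s) * star (star t) = W := by
      rw [star_star, mul_assoc, h2, mul_one]
    simpa [star_star, hQdef] using hδ (W * s) (star t) h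
  have inv_rel : ∀ t s : A, t * s = 1 → s * t = 1 →
      δ (W * s) = op s • δ W - (W * s) • (op s • Q t) := by
    intro t s h1 h2
    have hk := congrArg (fun m => op s • m) (key t s h1 h2)
    simp only [smul_add] at hk
    rw [← mul_smul, ← op_mul, h1, op_one, one_smul, hcomm] at hk
    rw [eq_sub_iff_add_eq, add_comm, hk]
  -- units from norm bounds
  have hunit : ∀ (y : A) (n : ℕ), ‖y‖ < (n:ℝ) → ∃ s : A,
      ((n:A) - y) * s = 1 ∧ s * ((n:A) - y) = 1 := by
    intro y n hy
    have hn0 : (0:ℝ) < (n:ℝ) := lt_of_le_of_lt (norm_nonneg y) hy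
    have hnc : ((n:ℂ)) ≠ 0 := by
      simp only [ne_eq, Nat.cast_eq_zero]
      exact_mod_cast hn0.ne'
    have hznorm : ‖((n:ℂ))⁻¹ • y‖ < 1 := by
      rw [norm_smul, norm_inv, Complex.norm_natCast]
      rw [inv_mul_lt_one₀ hn0]
      exact hy
    obtain ⟨u, hu⟩ := isUnit_one_sub_of_norm_lt_one hznorm
    have hfact : ((n:A) - y) = (((n:ℂ)) • (1:A)) * ((1:A) - ((n:ℂ))⁻¹ • y) := by
      rw [smul_mul_assoc, one_mul, smul_sub, smul_smul, mul_inv_cancel₀ hnc, one_smul, hcast]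
    refine ⟨↑u⁻¹ * (((n:ℂ))⁻¹ • (1:A)), ?_, ?_⟩
    · rw [hfact, ← hu, mul_assoc, ← mul_assoc (u:A), u.mul_inv, one_mul]
      simp [smul_mul_assoc, smul_smul, mul_inv_cancel₀ hnc, inv_mul_cancel₀ hnc]
    · rw [hfact, ← hu, mul_assoc]
      have h2 : (((n:ℂ))⁻¹ • (1:A)) * ((((n:ℂ)) • (1:A)) * ↑u) = ↑u := by
        simp [smul_mul_assoc, smul_smul, mul_inv_cancel₀ hnc, inv_mul_cancel₀ hnc]
      rw [h2, u.inv_mul]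
  -- sandwich lemma
  have hsand : ∀ (u v w : A), u * v = w → v * u = w → ∀ (Z : M),
      u • (op u • (v • (op v • Z))) = w • (op w • Z) := by
    intro u v w h1 h2 Z
    rw [hcomm u v (op v • Z), ← mul_smul u v, ← mul_smul (op u) (op v), ← op_mul, h1, h2]
  -- main Jordan identity for Q
  have jordan : ∀ x : A, Q (x * x) = x • Q x + op x • Q x := by
    intro x
    obtain ⟨n, hn⟩ := exists_nat_gt ‖x‖
    have hn0 : (0:ℝ) < (n:ℝ) := lt_of_le_of_lt (norm_nonneg x) hn
    have hnn0 : n ≠ 0 := by exact_mod_cast hn0.ne'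
    set c : ℂ := ((2*n : ℕ) : ℂ) with hcdef
    have hc0 : c ≠ 0 := by
      rw [hcdef]; exact_mod_cast Nat.mul_ne_zero two_ne_zero hnn0
    obtain ⟨s₁, h11', h12'⟩ := hunit x n hn
    obtain ⟨s₂, h21', h22'⟩ := hunit (-x) n (by simpa using hn)
    set t₁ : A := x - (n:A) with ht₁
    set t₂ : A := x + (n:A) with ht₂
    replace h11' : -t₁ * s₁ = 1 := by rw [ht₁, neg_sub]; exact h11'
    replace h12' : s₁ * -t₁ = 1 := by rw [ht₁, neg_sub]; exact h12'
    have h21 : t₂ * s₂ = 1 := by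
      rw [ht₂, add_comm]; rw [show (n:A) - -x = (n:A) + x from by abel] at h21'; exact h21'
    have h22 : s₂ * t₂ = 1 := by
      rw [ht₂, add_comm]; rw [show (n:A) - -x = (n:A) + x from by abel] at h22'; exact h22'
    set s₁' : A := -s₁ with hs₁'
    have h11 : t₁ * s₁' = 1 := by rw [hs₁', mul_neg, ← neg_mul]; exact h11'
    have h12 : s₁' * t₁ = 1 := by rw [hs₁', neg_mul, ← mul_neg]; exact h12'
    clear h11' h12' h21' h22'
    -- commutation facts
    have hxn : x * (n:A) = (n:A) * x := ((Nat.cast_commute n x).eq).symm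
    have hc12 : t₁ * t₂ = t₂ * t₁ := by
      rw [ht₁, ht₂, sub_mul, mul_add, mul_add, add_mul, mul_sub, mul_sub, hxn]; abel
    have ht₂s₁ : t₂ * s₁' = s₁' * t₂ := by
      calc t₂ * s₁' = (s₁' * t₁) * (t₂ * s₁') := by rw [h12, one_mul]
        _ = s₁' * (t₁ * t₂) * s₁' := by noncomm_ring
        _ = s₁' * (t₂ * t₁) * s₁' := by rw [hc12]
        _ = (s₁' * t₂) * (t₁ * s₁') := by noncomm_ring
        _ = s₁' * t₂ := by rw [h11, mul_one]
    have ht₁s₂ : t₁ * s₂ = s₂ * t₁ := by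
      calc t₁ * s₂ = (s₂ * t₂) * (t₁ * s₂) := by rw [h22, one_mul]
        _ = s₂ * (t₂ * t₁) * s₂ := by noncomm_ring
        _ = s₂ * (t₁ * t₂) * s₂ := by rw [hc12]
        _ = (s₂ * t₁) * (t₂ * s₂) := by noncomm_ring
        _ = s₂ * t₁ := by rw [h21, mul_one]
    set q : A := t₁ * t₂ with hqdef
    set sq : A := s₁' * s₂ with hsqdef
    have hqsq : q * sq = 1 := by
      rw [hqdef, hsqdef]
      calc t₁ * t₂ * (s₁' * s₂) = t₁ * (t₂ * s₁') * s₂ := by noncomm_ring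
        _ = t₁ * (s₁' * t₂) * s₂ := by rw [ht₂s₁]
        _ = (t₁ * s₁') * (t₂ * s₂) := by noncomm_ring
        _ = 1 := by rw [h11, h21, one_mul]
    have hsqq : sq * q = 1 := by
      rw [hqdef, hsqdef]
      calc s₁' * s₂ * (t₁ * t₂) = s₁' * (s₂ * t₁) * t₂ := by noncomm_ring
        _ = s₁' * (t₁ * s₂) * t₂ := by rw [ht₁s₂]
        _ = (s₁' * t₁) * (s₂ * t₂) := by noncomm_ring
        _ = 1 := by rw [h12, h22, one_mul]
    -- resolvent identity
    have hres : s₁' - s₂ = c • sq := by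
      have e1 : s₁' - s₂ = s₁' * (t₂ - t₁) * s₂ := by
        rw [mul_sub, sub_mul]
        rw [show s₁' * t₂ * s₂ = s₁' * (t₂ * s₂) from by rw [mul_assoc], h21, mul_one]
        rw [h12, one_mul]
      have e2 : t₂ - t₁ = ((2*n : ℕ) : A) := by
        rw [ht₁, ht₂]; push_cast; rw [two_mul]; abel
      rw [e1, e2, ((Nat.cast_commute (2*n) s₁').eq).symm, mul_assoc, ← hcast (2*n),
        smul_mul_assoc, one_mul, hsqdef, hcdef]
    -- values of Q
    have hQt₁ : Q t₁ = Q x := by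
      have hx1 : t₁ + (n:A) = x := by rw [ht₁]; abel
      calc Q t₁ = Q t₁ + Q ((n:A)) := by rw [hQnat, add_zero]
        _ = Q (t₁ + (n:A)) := (hQadd _ _).symm
        _ = Q x := by rw [hx1]
    have hQt₂ : Q t₂ = Q x := by
      have hx1 : t₂ = x + (n:A) := ht₂
      rw [hx1, hQadd, hQnat, add_zero]
    have hQq : Q q = Q (x*x) := by
      have hq2 : q + ((n*n : ℕ) : A) = x * x := by
        rw [hqdef, ht₁, ht₂, sub_mul, mul_add, mul_add, hxn]; push_cast; abel
      calc Q q = Q q + Q ((n*n : ℕ) : A) := by rw [hQnat, add_zero]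
        _ = Q (q + ((n*n : ℕ) : A)) := (hQadd _ _).symm
        _ = Q (x*x) := by rw [hq2]
    -- the three relations
    have E₁ := inv_rel t₁ s₁' h11 h12
    have E₂ := inv_rel t₂ s₂ h21 h22
    have Eq := inv_rel q sq hqsq hsqq
    rw [hQt₁] at E₁
    rw [hQt₂] at E₂
    rw [hQq] at Eq
    -- linearity relation
    have hm : δ (W * s₁') - δ (W * s₂) = c • δ (W * sq) := by
      rw [← map_sub, ← mul_sub, hres, mul_smul_comm, map_smul]
    rw [E₁, E₂, Eq] at hm
    have hid : op s₁' • δ W - op s₂ • δ W = c • (op sq • δ W) := by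
      rw [← sub_smul, ← op_sub, hres, op_smul, smul_assoc]
    have h4 : (W * s₂) • (op s₂ • Q x) - (W * s₁') • (op s₁' • Q x)
        + c • ((W * sq) • (op sq • Q (x*x))) = 0 := by
      rw [smul_sub] at hm
      calc (W * s₂) • (op s₂ • Q x) - (W * s₁') • (op s₁' • Q x)
            + c • ((W * sq) • (op sq • Q (x*x)))
          = ((op s₁' • δ W - (W * s₁') • op s₁' • Q x)
              - (op s₂ • δ W - (W * s₂) • op s₂ • Q x)
              - (c • (op sq • δ W) - c • ((W * sq) • op sq • Q (x*x))))
            - ((op s₁' • δ W - op s₂ • δ W) - c • (op sq • δ W)) := by abel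
        _ = 0 := by rw [sub_eq_zero_of_eq hm, sub_eq_zero_of_eq hid, sub_zero]
    -- pull out W
    have h5 : W • (s₂ • (op s₂ • Q x) - s₁' • (op s₁' • Q x)
        + c • (sq • (op sq • Q (x*x)))) = 0 := by
      rw [smul_add, smul_sub, ← mul_smul, ← mul_smul, smul_comm W c, ← mul_smul]
      exact h4
    have h6 := hW _ h5
    have h7 := congrArg (fun m => q • (op q • m)) h6
    simp only [smul_add, smul_sub, smul_zero, hc2, hc3] at h7
    have hq1 : q * s₁' = t₂ := by
      rw [hqdef, mul_assoc, ht₂s₁, ← mul_assoc, h11, one_mul]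
    have hq2 : s₁' * q = t₂ := by rw [hqdef, ← mul_assoc, h12, one_mul]
    have hq3 : q * s₂ = t₁ := by rw [hqdef, mul_assoc, h21, mul_one]
    have hq4 : s₂ * q = t₁ := by
      rw [hqdef, ← mul_assoc, ← ht₁s₂, mul_assoc, h22, mul_one]
    rw [hsand q s₂ t₁ hq3 hq4, hsand q s₁' t₂ hq1 hq2, hsand q sq 1 hqsq hsqq] at h7
    simp only [one_smul, op_one] at h7
    -- expand
    have hexp : t₁ • (op t₁ • Q x) - t₂ • (op t₂ • Q x)
        = -(c • (x • Q x + op x • Q x)) := by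
      have hcν : c = (n:ℂ) + (n:ℂ) := by rw [hcdef]; push_cast; ring
      rw [ht₁, ht₂]
      simp only [op_sub, op_add, sub_smul, add_smul, smul_sub, smul_add,
        hopnsmul, hnsmul, hc2, hc3, smul_smul]
      rw [hcν]
      simp only [add_smul, smul_add]
      abel
    rw [hexp] at h7
    have h8 : c • (Q (x*x) - (x • Q x + op x • Q x)) = 0 := by
      rw [smul_sub]
      rw [neg_add_eq_sub] at h7
      exact h7
    have h9 := congrArg (fun m => c⁻¹ • m) h8
    simp only [smul_smul, inv_mul_cancel₀ hc0, one_smul, smul_zero] at h9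
    exact sub_eq_zero.mp h9
  -- polarization
  have hpol : ∀ u v : A, Q (u*v + v*u)
      = u • Q v + op u • Q v + v • Q u + op v • Q u := by
    intro u v
    have h := jordan (u + v)
    rw [show (u+v)*(u+v) = u*u + (u*v + v*u) + v*v from by noncomm_ring,
        hQadd, hQadd, jordan u, jordan v, hQadd u v] at h
    simp only [add_smul, op_add, smul_add] at h
    linear_combination (norm := abel1) h
  -- Jordan triple identity
  have htriple : ∀ a b : A, Q (a * (b * a))
      = a • (op a • Q b) + (a*b) • Q a + op (b*a) • Q a := by
    intro a b
    have hid : (a * (a*b + b*a) + (a*b + b*a) * a)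
        = ((a*a) * b + b * (a*a)) + (a * (b * a) + a * (b * a)) := by noncomm_ring
    have h1 := hpol a (a*b + b*a)
    rw [hid, hQadd, hpol (a*a) b, hQadd (a*(b*a)) (a*(b*a)), hpol a b, jordan a] at h1
    simp only [smul_add, add_smul, op_add, op_mul, mul_smul, hcomm] at h1
    have h2 : (2:ℂ) • Q (a * (b * a))
        = (2:ℂ) • (a • (op a • Q b) + (a*b) • Q a + op (b*a) • Q a) := by
      rw [two_smul, two_smul]
      simp only [smul_add, add_smul, op_add, op_mul, mul_smul, hcomm]
      linear_combination (norm := abel1) h1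
    have h3 := congrArg (fun m => (2:ℂ)⁻¹ • m) h2
    simpa [smul_smul, inv_mul_cancel₀ (two_ne_zero (α := ℂ)), one_smul] using h3
  -- behaviour on inverses
  have hinvQ : ∀ t s : A, t * s = 1 → s * t = 1 →
      t • (op t • Q s) = -Q t := by
    intro t s h1 h2
    have h := htriple t s
    rw [h2, mul_one, h1, one_smul, op_one, one_smul] at h
    linear_combination (norm := abel1) -h
  -- second conclusion for invertible elements
  have goal2inv : ∀ t s : A, t * s = 1 → s * t = 1 →
      δ (W * t) = op t • δ W + W • Q t := by
    intro t s h1 h2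
    have hk := congrArg (fun m => op t • m) (key s t h2 h1)
    simp only [smul_add] at hk
    rw [← mul_smul (op t) (op s), ← op_mul, h2, op_one, one_smul, hcomm] at hk
    -- hk : op t • δ W = (W*t) • (op t • Q s) + δ (W * t)
    rw [show (W*t) • (op t • Q s) = W • (t • (op t • Q s)) from by rw [mul_smul],
      hinvQ t s h1 h2, smul_neg] at hk
    linear_combination (norm := abel1) -hk
  constructor
  · -- first conclusion
    intro a
    have h := jordan (star a)
    rw [← star_mul] at h
    simp only [hQdef, star_star] at h
    have h2 := congrArg star h
    simpa only [star_add, hstar_left, hstar_right, star_star] using h2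
  · -- second conclusion
    intro a
    obtain ⟨n, hn⟩ := exists_nat_gt ‖a‖
    obtain ⟨s, hs1, hs2⟩ := hunit a n hn
    have h1 : (a - (n:A)) * (-s) = 1 := by rw [mul_neg, ← neg_mul, neg_sub]; exact hs1
    have h2 : (-s) * (a - (n:A)) = 1 := by rw [neg_mul, ← mul_neg, neg_sub]; exact hs2
    have hg := goal2inv (a - (n:A)) (-s) h1 h2
    have hQa : Q (a - (n:A)) = Q a := by
      calc Q (a - (n:A)) = Q (a - (n:A)) + Q ((n:A)) := by rw [hQnat, add_zero]
        _ = Q (a - (n:A) + (n:A)) := (hQadd _ _).symm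
        _ = Q a := by rw [sub_add_cancel]
    rw [hQa] at hg
    have hWn : W * ((n:A)) = ((n:ℂ)) • W := by
      rw [← hcast n, mul_smul_comm, mul_one]
    have hsplit : W * a = W * (a - (n:A)) + ((n:ℂ)) • W := by
      rw [← hWn, ← mul_add, sub_add_cancel]
    have hda : δ (W * a) = δ (W * (a - (n:A))) + ((n:ℂ)) • δ W := by
      rw [hsplit, map_add, map_smul]
    have hopa : op a • δ W = op (a - (n:A)) • δ W + ((n:ℂ)) • δ W := by
      rw [show (op a : Aᵐᵒᵖ) = op (a - (n:A)) + op ((n:A)) from by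
          rw [← op_add, sub_add_cancel],
        add_smul, hopnsmul]
    rw [hda, hg, hopa]
    simp only [hQdef]
    abel
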